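/- Let $K$ be a number field with ring of integers $\mathcal{O}_K$, $n \geq 0$, and $I, J$ two ideals of $K[X_0,\dots,X_n]$. For each finite place $v$ of $K$, let $O_v \subseteq K$ be the localization of $\mathcal{O}_K$ at the corresponding maximal ideal, and let $\varphi_v : O_v[X_0,\dots,X_n] \to K[X_0,\dots,X_n]$ be the induced map of polynomial rings. Then for all but finitely many finite places $v$ of $K$, one has the equality of preimage ideals $(I + J).\mathrm{comap}\,\varphi_v = I.\mathrm{comap}\,\varphi_v + J.\mathrm{comap}\,\varphi_v$. -/

import Mathlib

open NumberField IsDedekindDomain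

/-- Denominator lemma: an element of `K` with `v`-adic valuation at most one can be
multiplied by some `s ∉ v` into the image of the ring of integers. -/
lemma exists_denom_of_valuation_le_one {A : Type*} [CommRing A] [IsDedekindDomain A]
    {K : Type*} [Field K] [Algebra A K] [IsFractionRing A K]
    (v : HeightOneSpectrum A) (x : K) (hx : v.valuation K x ≤ 1) :
    ∃ s : A, s ∉ v.asIdeal ∧ ∃ a : A, algebraMap A K s * x = algebraMap A K a := by
  classical
  obtain ⟨⟨a, b⟩, hab⟩ := IsLocalization.surj (nonZeroDivisors A) x
  have hb0 : (b : A) ≠ 0 := nonZeroDivisors.coe_ne_zero b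
  set m : ℕ := (Associates.mk v.asIdeal).count (Associates.mk (Ideal.span {(b : A)})).factors
    with hm
  have hvb : v.intValuation (b : A) = WithZero.exp (-(m : ℤ)) :=
    v.intValuation_if_neg hb0
  -- valuation of a
  have hva : v.intValuation a ≤ WithZero.exp (-(m : ℤ)) := by
    rw [← hvb]
    have h1 : v.valuation K (algebraMap A K a) =
        v.valuation K x * v.valuation K (algebraMap A K (b : A)) := by
      rw [← map_mul, ← hab]
    have h2 : v.valuation K x * v.valuation K (algebraMap A K (b : A)) ≤
        v.valuation K (algebraMap A K (b : A)) := mul_le_of_le_one_left' hx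
    have h3 : v.valuation K (algebraMap A K a) ≤ v.valuation K (algebraMap A K (b : A)) :=
      h1.trans_le h2
    rwa [v.valuation_of_algebraMap, v.valuation_of_algebraMap] at h3
  have hpa : v.asIdeal ^ m ∣ Ideal.span {a} := (v.intValuation_le_pow_iff_dvd a m).mp hva
  have hpb : v.asIdeal ^ m ∣ Ideal.span {(b : A)} :=
    (v.intValuation_le_pow_iff_dvd (b : A) m).mp hvb.le
  obtain ⟨C, hC⟩ := hpb
  have hpC : ¬ v.asIdeal ∣ C := by
    intro ⟨D, hD⟩
    have : v.asIdeal ^ (m + 1) ∣ Ideal.span {(b : A)} := ⟨D, by rw [hC, hD, pow_succ]; ring⟩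
    have hle := (v.intValuation_le_pow_iff_dvd (b : A) (m + 1)).mpr this
    rw [hvb] at hle
    have := WithZero.exp_le_exp.mp hle
    omega
  rw [Ideal.dvd_iff_le] at hpC
  obtain ⟨s, hsC, hsp⟩ := SetLike.not_le_iff_exists.mp hpC
  refine ⟨s, hsp, ?_⟩
  have hdvd : (b : A) ∣ s * a := by
    rw [← Ideal.span_singleton_le_span_singleton, ← Ideal.span_singleton_mul_span_singleton, hC]
    rw [mul_comm (v.asIdeal ^ m) C]
    exact Ideal.mul_mono ((Ideal.span_singleton_le_iff_mem C).mpr hsC)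
      (Ideal.le_of_dvd hpa)
  obtain ⟨c, hc⟩ := hdvd
  refine ⟨c, ?_⟩
  have hbK : algebraMap A K (b : A) ≠ 0 := by
    simpa using (map_ne_zero_iff _ (IsFractionRing.injective A K)).mpr hb0
  apply mul_right_cancel₀ hbK
  calc algebraMap A K s * x * algebraMap A K (b : A)
      = algebraMap A K s * (x * algebraMap A K (b : A)) := by ring
    _ = algebraMap A K s * algebraMap A K a := by rw [hab]
    _ = algebraMap A K (s * a) := by rw [map_mul]
    _ = algebraMap A K ((b : A) * c) := by rw [hc]
    _ = algebraMap A K c * algebraMap A K (b : A) := by rw [map_mul]; ring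

/-- Clearing denominators for multivariate polynomials. -/
lemma exists_clear_denom {A S : Type*} [CommRing A] [CommRing S] (φ : A →+* S)
    (T : Submonoid A) (h : ∀ x : S, ∃ s ∈ T, ∃ a : A, φ s * x = φ a)
    {σ : Type*} (p : MvPolynomial σ S) :
    ∃ s ∈ T, ∃ q : MvPolynomial σ A,
      MvPolynomial.map φ q = MvPolynomial.C (φ s) * p := by
  induction p using MvPolynomial.induction_on with
  | C x =>
      obtain ⟨s, hs, a, ha⟩ := h x
      exact ⟨s, hs, MvPolynomial.C a, by rw [MvPolynomial.map_C, ← ha, map_mul]⟩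
  | add p q hp hq =>
      obtain ⟨s1, hs1, q1, hq1⟩ := hp
      obtain ⟨s2, hs2, q2, hq2⟩ := hq
      refine ⟨s1 * s2, T.mul_mem hs1 hs2, MvPolynomial.C s2 * q1 + MvPolynomial.C s1 * q2, ?_⟩
      rw [map_add, map_mul, map_mul, MvPolynomial.map_C, MvPolynomial.map_C, hq1, hq2,
        map_mul, MvPolynomial.C_mul]
      ring
  | mul_X p i hp =>
      obtain ⟨s, hs, q, hq⟩ := hp
      refine ⟨s, hs, q * MvPolynomial.X i, ?_⟩
      rw [map_mul, MvPolynomial.map_X, hq]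
      ring

set_option maxHeartbeats 2000000 in
theorem finite_setOf_comap_add_ne_add_comap
    (K : Type*) [Field K] [NumberField K] (n : ℕ)
    (I J : Ideal (MvPolynomial (Fin (n + 1)) K)) :
    {v : HeightOneSpectrum (𝓞 K) |
      Ideal.comap (MvPolynomial.map ((v.valuation K).valuationSubring.subtype)) (I + J) ≠
        Ideal.comap (MvPolynomial.map ((v.valuation K).valuationSubring.subtype)) I +
          Ideal.comap (MvPolynomial.map ((v.valuation K).valuationSubring.subtype)) J}.Finite := by
  classical
  set A := 𝓞 K
  set algKA : A →+* K := algebraMap A K with halgKA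
  have halginj : Function.Injective algKA := IsFractionRing.injective A K
  set mapK : MvPolynomial (Fin (n + 1)) A →+* MvPolynomial (Fin (n + 1)) K :=
    MvPolynomial.map algKA with hmapK
  have hmapKinj : Function.Injective mapK := MvPolynomial.map_injective algKA halginj
  set I₀ : Ideal (MvPolynomial (Fin (n + 1)) A) := I.comap mapK with hI₀
  set J₀ : Ideal (MvPolynomial (Fin (n + 1)) A) := J.comap mapK with hJ₀
  set L₀ : Ideal (MvPolynomial (Fin (n + 1)) A) := (I + J).comap mapK with hL₀
  -- clearing denominators from K[X] to A[X]
  have hclearK : ∀ p : MvPolynomial (Fin (n + 1)) K,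
      ∃ c : A, c ≠ 0 ∧ ∃ q : MvPolynomial (Fin (n + 1)) A,
        mapK q = MvPolynomial.C (algKA c) * p := by
    intro p
    have h : ∀ x : K, ∃ s ∈ nonZeroDivisors A, ∃ a : A, algKA s * x = algKA a := by
      intro x
      obtain ⟨⟨a, b⟩, hab⟩ := IsLocalization.surj (nonZeroDivisors A) x
      exact ⟨b, b.2, a, by rw [mul_comm]; exact hab⟩
    obtain ⟨s, hs, q, hq⟩ := exists_clear_denom algKA (nonZeroDivisors A) h p
    exact ⟨s, nonZeroDivisors.ne_zero hs, q, hq⟩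
  -- choose generators of L₀
  obtain ⟨G, hG⟩ : L₀.FG := IsNoetherian.noetherian L₀
  -- for each generator, a nonzero multiplier into I₀ + J₀
  have key : ∀ g : {x // x ∈ G}, ∃ c : A, c ≠ 0 ∧
      MvPolynomial.C c * (g : MvPolynomial (Fin (n + 1)) A) ∈ I₀ + J₀ := by
    rintro ⟨g, hg⟩
    have hgL : g ∈ L₀ := by rw [← hG]; exact Ideal.subset_span hg
    have hgIJ : mapK g ∈ I + J := hgL
    rw [Ideal.add_eq_sup] at hgIJ
    obtain ⟨p, hp, q, hq, hpq⟩ := Submodule.mem_sup.mp hgIJ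
    obtain ⟨cp, hcp, qp, hqp⟩ := hclearK p
    obtain ⟨cq, hcq, qq, hqq⟩ := hclearK q
    refine ⟨cp * cq, mul_ne_zero hcp hcq, ?_⟩
    have hqpI : qp ∈ I₀ := by
      show mapK qp ∈ I
      rw [hqp]; exact Ideal.mul_mem_left _ _ hp
    have hqqJ : qq ∈ J₀ := by
      show mapK qq ∈ J
      rw [hqq]; exact Ideal.mul_mem_left _ _ hq
    have heq : MvPolynomial.C (cp * cq) * g =
        MvPolynomial.C cq * qp + MvPolynomial.C cp * qq := by
      apply hmapKinj
      simp only [hmapK, map_mul, map_add, MvPolynomial.map_C, MvPolynomial.C_mul] at hqp hqq hpq ⊢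
      rw [hqp, hqq, ← hpq]
      ring
    rw [heq, Ideal.add_eq_sup]
    exact Submodule.add_mem _ (Submodule.mem_sup_left (Ideal.mul_mem_left _ _ hqpI))
      (Submodule.mem_sup_right (Ideal.mul_mem_left _ _ hqqJ))
  choose c hc0 hcmem using key
  set t : A := ∏ g : {x // x ∈ G}, c g with ht
  have ht0 : t ≠ 0 := Finset.prod_ne_zero_iff.mpr fun g _ => hc0 g
  -- t clears L₀ into I₀ + J₀
  have htL : ∀ f ∈ L₀, MvPolynomial.C t * f ∈ I₀ + J₀ := by
    intro f hf
    rw [← hG] at hf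
    induction hf using Submodule.span_induction with
    | mem g hg =>
        have := Finset.mul_prod_erase Finset.univ c (Finset.mem_univ (⟨g, hg⟩ : {x // x ∈ G}))
        have heq : MvPolynomial.C t * g =
            MvPolynomial.C (∏ x ∈ Finset.univ.erase ⟨g, hg⟩, c x) *
              (MvPolynomial.C (c ⟨g, hg⟩) * g) := by
          rw [← mul_assoc, ← map_mul, mul_comm (∏ x ∈ Finset.univ.erase ⟨g, hg⟩, c x), this]
        rw [heq]
        exact Ideal.mul_mem_left _ _ (hcmem ⟨g, hg⟩)
    | zero => simpa using Ideal.zero_mem _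
    | add x y hx hy hx' hy' => rw [mul_add]; exact Ideal.add_mem _ hx' hy'
    | smul a x hx hx' =>
        rw [smul_eq_mul, mul_left_comm]
        exact Ideal.mul_mem_left _ _ hx'
  -- the bad set is contained in the set of primes dividing (t)
  apply Set.Finite.subset (Ideal.finite_factors
    (show Ideal.span {t} ≠ 0 by
      simpa using ht0))
  intro v hv
  show v.asIdeal ∣ Ideal.span {t}
  rw [Ideal.dvd_span_singleton]
  by_contra hts
  apply hv
  -- now prove the equality at v
  set Ov : ValuationSubring K := (v.valuation K).valuationSubring with hOv
  set ψv : A →+* Ov := (algKA.codRestrict Ov.toSubring fun a => v.valuation_le_one (K := K) a) with hψv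
  set φ : MvPolynomial (Fin (n + 1)) Ov →+* MvPolynomial (Fin (n + 1)) K :=
    MvPolynomial.map Ov.subtype with hφ
  set ψ : MvPolynomial (Fin (n + 1)) A →+* MvPolynomial (Fin (n + 1)) Ov :=
    MvPolynomial.map ψv with hψ
  have hcomp : ∀ q : MvPolynomial (Fin (n + 1)) A, φ (ψ q) = mapK q := by
    intro q
    show MvPolynomial.map Ov.subtype (MvPolynomial.map ψv q) = MvPolynomial.map algKA q
    rw [MvPolynomial.map_map]
    congr 1
  apply le_antisymm
  · -- hard direction
    intro f hf
    have hfIJ : φ f ∈ I + J := hf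
    -- clear denominators of f
    have hden : ∀ x : Ov, ∃ s ∈ v.asIdeal.primeCompl, ∃ a : A, ψv s * x = ψv a := by
      intro x
      obtain ⟨s, hsp, a, ha⟩ := exists_denom_of_valuation_le_one v (x : K) x.2
      exact ⟨s, hsp, a, Subtype.ext ha⟩
    obtain ⟨s, hsp, f', hf'⟩ := exists_clear_denom ψv v.asIdeal.primeCompl hden f
    have hf'L : f' ∈ L₀ := by
      show mapK f' ∈ I + J
      rw [← hcomp, hf', map_mul]
      exact Ideal.mul_mem_left _ _ hfIJ
    have hmem := htL f' hf'L
    rw [Ideal.add_eq_sup] at hmem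
    obtain ⟨p', hp', q', hq', hpq'⟩ := Submodule.mem_sup.mp hmem
    -- push to Ov[X]
    have hψp' : ψ p' ∈ Ideal.comap φ I := by
      show φ (ψ p') ∈ I
      rw [hcomp]; exact hp'
    have hψq' : ψ q' ∈ Ideal.comap φ J := by
      show φ (ψ q') ∈ J
      rw [hcomp]; exact hq'
    set N : Ideal (MvPolynomial (Fin (n + 1)) Ov) := Ideal.comap φ I + Ideal.comap φ J with hN
    have hsum : MvPolynomial.C (ψv t * ψv s) * f ∈ N := by
      have heq2 : MvPolynomial.C (ψv t * ψv s) * f = ψ p' + ψ q' := by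
        have h5 := congrArg ψ hpq'
        simp only [hψ, map_add, map_mul, MvPolynomial.map_C] at h5
        rw [hf'] at h5
        rw [h5, MvPolynomial.C_mul]
        ring
      rw [heq2, hN]
      exact Ideal.add_mem _ (Ideal.mem_sup_left hψp') (Ideal.mem_sup_right hψq')
    -- ψv t * ψv s is a unit in Ov
    have hts_not : t * s ∉ v.asIdeal := fun h =>
      ((v.isPrime.mem_or_mem h).elim hts hsp)
    have hts0 : t * s ≠ 0 := fun h => hts_not (h ▸ v.asIdeal.zero_mem)
    have hval1 : v.valuation K (algKA (t * s)) = 1 := by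
      rcases lt_or_eq_of_le (v.valuation_le_one (R := A) (K := K) (t * s)) with hlt | heq
      · exact absurd (Ideal.dvd_span_singleton.mp ((v.valuation_lt_one_iff_dvd _).mp hlt)) hts_not
      · exact heq
    have hKne : algKA (t * s) ≠ 0 := (map_ne_zero_iff _ halginj).mpr hts0
    have hinvmem : (algKA (t * s))⁻¹ ∈ Ov := by
      show v.valuation K (algKA (t * s))⁻¹ ≤ 1
      rw [map_inv₀, hval1]
      norm_num
    set w : Ov := ⟨(algKA (t * s))⁻¹, hinvmem⟩ with hw
    have hwu : w * (ψv t * ψv s) = 1 := by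
      apply Subtype.ext
      show (algKA (t * s))⁻¹ * (algKA t * algKA s) = 1
      rw [← map_mul]
      exact inv_mul_cancel₀ hKne
    have : f = MvPolynomial.C w * (MvPolynomial.C (ψv t * ψv s) * f) := by
      rw [← mul_assoc, ← map_mul, hwu, map_one, one_mul]
    rw [this]
    exact Ideal.mul_mem_left _ _ hsum
  · -- easy direction
    rw [Ideal.add_eq_sup, Ideal.add_eq_sup]
    exact sup_le (Ideal.comap_mono le_sup_left) (Ideal.comap_mono le_sup_right)
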